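/- Let G be a finite p-group, let H be a normal subgroup of G, and let k ≥ 1. Then [H, G^{p^k}] ≤ [H,G]^p · [H, G, …, G], where the iterated commutator subgroup on the right has p^k copies of G. -/

import Mathlib

/-!
STATEMENT 12: Let G be a finite p-group, let H be a normal subgroup of G, and
let k ≥ 1.  Then [H, G^{p^k}] ≤ [H,G]^p · [H, G, …, G], where the iterated
commutator subgroup on the right has p^k copies of G.

Here `iterComm H j` is the iterated commutator subgroup [H, G, …(j times)…, G],
`sgPow H n = ⟨h^n : h ∈ H⟩` (so G^{p^k} = sgPow ⊤ (p^k) and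
[H,G]^p = sgPow ⁅H,⊤⁆ p), and the product of the two normal subgroups on the
right-hand side is their join ⊔.
-/

/-- The subgroup `⟨h^n : h ∈ H⟩` generated by the `n`-th powers of elements of `H`. -/
def sgPow {G : Type*} [Group G] (H : Subgroup G) (n : ℕ) : Subgroup G :=
  Subgroup.closure ((· ^ n) '' (H : Set G))

/-- The iterated commutator subgroup `[H, G, …(j times)…, G]`. -/
def iterComm {G : Type*} [Group G] (H : Subgroup G) : ℕ → Subgroup G
  | 0 => H
  | j + 1 => ⁅iterComm H j, (⊤ : Subgroup G)⁆

open scoped commutatorElement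

set_option maxHeartbeats 1000000 in
/-- Hall-Witt style three subgroups lemma, `≤ N` version. -/
theorem three_subgroups' {G : Type*} [Group G] {A B D N : Subgroup G} (hN : N.Normal)
    (h1 : ⁅⁅B, D⁆, A⁆ ≤ N) (h2 : ⁅⁅D, A⁆, B⁆ ≤ N) : ⁅⁅A, B⁆, D⁆ ≤ N := by
  haveI := hN
  let f := QuotientGroup.mk' N
  have hker : f.ker = N := QuotientGroup.ker_mk' N
  have key : ∀ X : Subgroup G, X ≤ N ↔ X.map f = ⊥ := by
    intro X
    rw [Subgroup.map_eq_bot_iff, hker]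
  rw [key] at h1 h2 ⊢
  rw [Subgroup.map_commutator, Subgroup.map_commutator] at h1 h2 ⊢
  exact Subgroup.commutator_commutator_eq_bot_of_rotate h1 h2

section Aux
variable {G : Type*} [Group G]

theorem mem_sgPow {H : Subgroup G} {h : G} (hh : h ∈ H) (m : ℕ) : h ^ m ∈ sgPow H m :=
  Subgroup.subset_closure ⟨h, hh, rfl⟩

theorem sgPow_le {H K : Subgroup G} {m : ℕ} (h : ∀ x ∈ H, x ^ m ∈ K) : sgPow H m ≤ K := by
  rw [sgPow, Subgroup.closure_le]
  rintro _ ⟨x, hx, rfl⟩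
  exact h x hx

theorem sgPow_mono {H K : Subgroup G} (h : H ≤ K) (m : ℕ) : sgPow H m ≤ sgPow K m :=
  sgPow_le fun x hx => mem_sgPow (h hx) m

theorem sgPow_normal {H : Subgroup G} (hH : H.Normal) (m : ℕ) : (sgPow H m).Normal := by
  constructor
  intro x hx g
  refine Subgroup.closure_induction (k := (· ^ m) '' (H : Set G))
    (p := fun y _ => g * y * g⁻¹ ∈ sgPow H m) ?_ ?_ ?_ ?_ hx
  · rintro _ ⟨h, hh, rfl⟩
    have : g * h ^ m * g⁻¹ = (g * h * g⁻¹) ^ m := by rw [conj_pow]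
    rw [this]
    exact mem_sgPow (hH.conj_mem h hh g) m
  · simpa using (sgPow H m).one_mem
  · intro a b _ _ ha hb
    have : g * (a * b) * g⁻¹ = (g * a * g⁻¹) * (g * b * g⁻¹) := by group
    rw [this]; exact (sgPow H m).mul_mem ha hb
  · intro a _ ha
    have : g * a⁻¹ * g⁻¹ = (g * a * g⁻¹)⁻¹ := by group
    rw [this]; exact (sgPow H m).inv_mem ha

variable {H : Subgroup G} (hH : H.Normal)
include hH

theorem iterComm_normal : ∀ j, (iterComm H j).Normal
  | 0 => hH
  | j + 1 => by
    haveI := iterComm_normal j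
    exact Subgroup.commutator_normal _ _

theorem iterComm_succ_le (j : ℕ) : iterComm H (j + 1) ≤ iterComm H j := by
  haveI := iterComm_normal hH j
  exact Subgroup.commutator_le_left _ _

theorem iterComm_antitone {j j' : ℕ} (h : j ≤ j') : iterComm H j' ≤ iterComm H j := by
  induction j' with
  | zero => simpa using (Nat.le_zero.mp h) ▸ le_rfl
  | succ m ih =>
    rcases Nat.lt_or_ge j (m + 1) with hlt | hge
    · exact (iterComm_succ_le hH m).trans (ih (Nat.lt_succ_iff.mp hlt))
    · have : j = m + 1 := le_antisymm h hge
      rw [this]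

theorem iterComm_grading : ∀ j i, ⁅iterComm H i, iterComm H j⁆ ≤ iterComm H (i + j) := by
  intro j
  induction j with
  | zero =>
    intro i
    haveI := iterComm_normal hH i
    have h0 : ⁅iterComm H i, iterComm H 0⁆ ≤ iterComm H i :=
      Subgroup.commutator_le_left (iterComm H i) (iterComm H 0)
    simpa using h0
  | succ m ih =>
    intro i
    haveI := iterComm_normal hH (i + (m + 1))
    have hcomm : ⁅iterComm H i, iterComm H (m+1)⁆ = ⁅⁅iterComm H m, (⊤ : Subgroup G)⁆, iterComm H i⁆ := by
      rw [show iterComm H (m+1) = ⁅iterComm H m, (⊤ : Subgroup G)⁆ from rfl,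
        Subgroup.commutator_comm]
    rw [hcomm]
    apply three_subgroups' (iterComm_normal hH (i + (m + 1)))
    · -- ⁅⁅⊤, iterComm H i⁆, iterComm H m⁆ ≤ _
      have h1 : ⁅(⊤ : Subgroup G), iterComm H i⁆ = iterComm H (i+1) := by
        rw [Subgroup.commutator_comm]; rfl
      rw [h1]
      have := ih (i+1)
      calc ⁅iterComm H (i+1), iterComm H m⁆ ≤ iterComm H (i + 1 + m) := ih (i+1)
        _ ≤ iterComm H (i + (m+1)) := by rw [show i + 1 + m = i + (m+1) by omega]
    · -- ⁅⁅iterComm H i, iterComm H m⁆, ⊤⁆ ≤ _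
      calc ⁅⁅iterComm H i, iterComm H m⁆, (⊤ : Subgroup G)⁆
          ≤ ⁅iterComm H (i + m), (⊤ : Subgroup G)⁆ :=
            Subgroup.commutator_mono (ih i) le_rfl
        _ = iterComm H (i + m + 1) := rfl
        _ ≤ iterComm H (i + (m + 1)) := by rw [show i + m + 1 = i + (m+1) by omega]

end Aux

section Core

variable {Q : Type*} [Group Q]

/-- Difference sequence. -/
def Dseq (u : ℕ → Q) : ℕ → Q := fun i => (u i)⁻¹ * u (i + 1)

/-- Graded polynomial-type sequences: `u i ∈ C v` for all `i`, and the difference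
sequence is again of this type with slope `a+1`. -/
def FF (C : ℕ → Subgroup Q) (n : ℕ) : ℕ → ℕ → ℕ → (ℕ → Q) → Prop
  | 0, _, v, u => ∀ i, u i ∈ C v
  | f + 1, a, v, u =>
      (∀ i, u i ∈ C v) ∧ (v < n → FF C n f (a + 1) (max (a + 1) v) (Dseq u))

/-- Hypotheses on the chain. -/
structure ChainHyp (C : ℕ → Subgroup Q) (n p : ℕ) : Prop where
  anti : ∀ {a b : ℕ}, a ≤ b → C b ≤ C a
  norm : ∀ j, (C j).Normal
  grade : ∀ a b : ℕ, ⁅C a, C b⁆ ≤ C (a + b)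
  bot : C n = ⊥
  expp : ∀ x ∈ C 1, x ^ p = 1
  dvd : ∀ t, 0 < t → t < n → p ∣ n.choose t

variable {C : ℕ → Subgroup Q} {n p : ℕ}

theorem FF_values {f a v : ℕ} {u : ℕ → Q} (h : FF C n f a v u) : ∀ i, u i ∈ C v := by
  cases f with
  | zero => exact h
  | succ f => exact h.1

theorem FF_congr {f a v : ℕ} {u w : ℕ → Q} (h : ∀ i, u i = w i) (hu : FF C n f a v u) :
    FF C n f a v w := by
  have : u = w := funext h
  exact this ▸ hu

theorem FF_one : ∀ f a v, FF C n f a v (fun _ => (1 : Q)) := by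
  intro f
  induction f with
  | zero => intro a v i; exact (C v).one_mem
  | succ f ih =>
    intro a v
    refine ⟨fun i => (C v).one_mem, fun _ => ?_⟩
    have hd : ∀ i, (1 : Q) = Dseq (fun _ => (1 : Q)) i := by
      intro i; simp [Dseq]
    exact FF_congr hd (ih _ _)

theorem FF_eq_one (hC : ChainHyp C n p) {f a v : ℕ} {u : ℕ → Q} (hv : n ≤ v)
    (hu : FF C n f a v u) : ∀ i, u i = 1 := by
  intro i
  have := hC.anti hv (FF_values hu i)
  rw [hC.bot] at this
  exact Subgroup.mem_bot.mp this

theorem FF_mono (hC : ChainHyp C n p) :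
    ∀ f a v a' v' (u : ℕ → Q), a' ≤ a → v' ≤ v → FF C n f a v u → FF C n f a' v' u := by
  intro f
  induction f with
  | zero => intro a v a' v' u _ hv hu i; exact hC.anti hv (hu i)
  | succ f ih =>
    intro a v a' v' u ha hv hu
    refine ⟨fun i => hC.anti hv (hu.1 i), fun hv' => ?_⟩
    rcases lt_or_ge v n with h | h
    · exact ih _ _ _ _ _ (by omega) (by omega) (hu.2 h)
    · have h1 : ∀ i, (1 : Q) = Dseq u i := by
        intro i; simp [Dseq, FF_eq_one hC h hu]
      exact FF_congr h1 (FF_one _ _ _)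

theorem FF_fuel_mono : ∀ f a v (u : ℕ → Q), FF C n (f + 1) a v u → FF C n f a v u := by
  intro f
  induction f with
  | zero => intro a v u h; exact h.1
  | succ f ih => intro a v u h; exact ⟨h.1, fun hv => ih _ _ _ (h.2 hv)⟩

private theorem comm_expand (x dx y dy : Q) :
    (⁅x, y⁆⁻¹ * (x * ⁅dx, y⁆ * x⁻¹) * ⁅x, y⁆) * ((y * x) * ⁅dx, dy⁆ * (y * x)⁻¹) *
      (y * ⁅x, dy⁆ * y⁻¹) = ⁅x, y⁆⁻¹ * ⁅x * dx, y * dy⁆ := by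
  simp only [commutatorElement_def]
  group

private theorem Dseq_succ (u : ℕ → Q) (i : ℕ) : u (i + 1) = u i * Dseq u i := by
  simp [Dseq]

set_option maxHeartbeats 2000000 in
theorem FF_closure (hC : ChainHyp C n p) : ∀ f,
    (∀ a v (u : ℕ → Q), a ≤ v → FF C n f a v u → FF C n f a v (fun i => (u i)⁻¹)) ∧
    (∀ a v b z (u w : ℕ → Q), a ≤ v → b ≤ z → FF C n f a v u → FF C n f b z w →
      FF C n f (min a b) (min v z) (fun i => u i * w i)) ∧
    (∀ a v b z (u w : ℕ → Q), a ≤ v → b ≤ z → FF C n f a v u → FF C n f b z w →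
      FF C n f a v (fun i => w i * u i * (w i)⁻¹)) ∧
    (∀ a v b z (u w : ℕ → Q), a ≤ v → b ≤ z → FF C n f a v u → FF C n f b z w →
      FF C n f (a + b) (v + z) (fun i => ⁅u i, w i⁆)) := by
  intro f
  induction f with
  | zero =>
    refine ⟨fun a v u _ hu i => (C v).inv_mem (hu i),
      fun a v b z u w _ _ hu hw i =>
        (C (min v z)).mul_mem (hC.anti (min_le_left _ _) (hu i))
          (hC.anti (min_le_right _ _) (hw i)),
      fun a v b z u w _ _ hu hw i => (hC.norm v).conj_mem _ (hu i) _,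
      fun a v b z u w _ _ hu hw i =>
        hC.grade v z (Subgroup.commutator_mem_commutator (hu i) (hw i))⟩
  | succ f ih =>
    obtain ⟨Iinv, Imul, Iconj, Icomm⟩ := ih
    -- commutator closure at level f+1
    have comm : ∀ a v b z (u w : ℕ → Q), a ≤ v → b ≤ z → FF C n (f+1) a v u →
        FF C n (f+1) b z w → FF C n (f+1) (a + b) (v + z) (fun i => ⁅u i, w i⁆) := by
      intro a v b z u w ha hb hu hw
      refine ⟨fun i => hC.grade v z (Subgroup.commutator_mem_commutator (hu.1 i) (hw.1 i)),
        fun hvz => ?_⟩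
      have hv : v < n := by omega
      have hz : z < n := by omega
      have Du := hu.2 hv
      have Dw := hw.2 hz
      have uf := FF_fuel_mono _ _ _ _ hu
      have wf := FF_fuel_mono _ _ _ _ hw
      have hav' : a + 1 ≤ max (a+1) v := le_max_left _ _
      have hbz' : b + 1 ≤ max (b+1) z := le_max_left _ _
      -- S1
      have c1 := Icomm (a+1) (max (a+1) v) b z _ _ hav' hb Du wf
      have c2 := Iconj (a+1+b) (max (a+1) v + z) a v _ _ (by omega) ha c1 uf
      have cuw := Icomm a v b z _ _ ha hb uf wf
      have cuwi := Iinv (a+b) (v+z) _ (by omega) cuw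
      have S1 := Iconj (a+1+b) (max (a+1) v + z) (a+b) (v+z) _ _ (by omega) (by omega) c2 cuwi
      -- S2
      have cdd := Icomm (a+1) (max (a+1) v) (b+1) (max (b+1) z) _ _ hav' hbz' Du Dw
      have cwu := Imul b z a v _ _ hb ha wf uf
      have S2 := Iconj (a+1+(b+1)) (max (a+1) v + max (b+1) z) (min b a) (min z v) _ _
        (by omega) (by omega) cdd cwu
      -- S3
      have c3 := Icomm a v (b+1) (max (b+1) z) _ _ ha hbz' uf Dw
      have S3 := Iconj (a+(b+1)) (v + max (b+1) z) b z _ _ (by omega) hb c3 wf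
      have P12 := Imul _ _ _ _ _ _ (by omega) (by omega) S1 S2
      have P := Imul _ _ _ _ _ _ (by omega) (by omega) P12 S3
      refine FF_congr (fun i => ?_) (FF_mono hC f _ _ _ _ _ (by omega) (by omega) P)
      show _ = Dseq (fun i => ⁅u i, w i⁆) i
      have h1 : u (i+1) = u i * Dseq u i := Dseq_succ u i
      have h2 : w (i+1) = w i * Dseq w i := Dseq_succ w i
      show _ = (⁅u i, w i⁆)⁻¹ * ⁅u (i+1), w (i+1)⁆
      rw [h1, h2, ← comm_expand]
      simp only [inv_inv]
    -- product closure at level f+1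
    have mul : ∀ a v b z (u w : ℕ → Q), a ≤ v → b ≤ z → FF C n (f+1) a v u →
        FF C n (f+1) b z w → FF C n (f+1) (min a b) (min v z) (fun i => u i * w i) := by
      intro a v b z u w ha hb hu hw
      refine ⟨fun i => (C (min v z)).mul_mem (hC.anti (min_le_left _ _) (hu.1 i))
        (hC.anti (min_le_right _ _) (hw.1 i)), fun hmin => ?_⟩
      rcases lt_or_ge v n with hv | hv
      · rcases lt_or_ge z n with hz | hz
        · -- main case
          have Du := hu.2 hv
          have Dw := hw.2 hz
          have uf := FF_fuel_mono _ _ _ _ hu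
          have wf := FF_fuel_mono _ _ _ _ hw
          have winv := Iinv b z _ hb wf
          have X := Iconj (a+1) (max (a+1) v) b z _ _ (le_max_left _ _) hb Du winv
          have Y := Imul (a+1) (max (a+1) v) (b+1) (max (b+1) z) _ _ (le_max_left _ _)
            (le_max_left _ _) X Dw
          refine FF_congr (fun i => ?_) (FF_mono hC f _ _ _ _ _ (by omega) (by omega) Y)
          show ((w i)⁻¹ * Dseq u i * ((w i)⁻¹)⁻¹) * Dseq w i = Dseq (fun i => u i * w i) i
          simp only [Dseq, inv_inv, mul_inv_rev]
          group
        · -- w ≡ 1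
          have hw1 := FF_eq_one hC hz hw
          have Du := hu.2 hv
          refine FF_congr (fun i => ?_) (FF_mono hC f _ _ _ _ _ (by omega) (by omega) Du)
          simp [Dseq, hw1 i, hw1 (i+1)]
      · -- u ≡ 1
        have hu1 := FF_eq_one hC hv hu
        have hz : z < n := by omega
        have Dw := hw.2 hz
        refine FF_congr (fun i => ?_) (FF_mono hC f _ _ _ _ _ (by omega) (by omega) Dw)
        simp [Dseq, hu1 i, hu1 (i+1)]
    -- conjugation closure at level f+1
    have conj : ∀ a v b z (u w : ℕ → Q), a ≤ v → b ≤ z → FF C n (f+1) a v u →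
        FF C n (f+1) b z w → FF C n (f+1) a v (fun i => w i * u i * (w i)⁻¹) := by
      intro a v b z u w ha hb hu hw
      have X := comm b z a v _ _ hb ha hw hu
      have Y := mul (b+a) (z+v) a v _ _ (by omega) ha X hu
      refine FF_congr (fun i => ?_) (FF_mono hC (f+1) _ _ _ _ _ (by omega) (by omega) Y)
      show ⁅w i, u i⁆ * u i = w i * u i * (w i)⁻¹
      simp only [commutatorElement_def]
      group
    -- inverse closure at level f+1
    have inv : ∀ a v (u : ℕ → Q), a ≤ v → FF C n (f+1) a v u →
        FF C n (f+1) a v (fun i => (u i)⁻¹) := by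
      intro a v u ha hu
      refine ⟨fun i => (C v).inv_mem (hu.1 i), fun hv => ?_⟩
      have Du := hu.2 hv
      have uf := FF_fuel_mono _ _ _ _ hu
      have DuI := Iinv (a+1) (max (a+1) v) _ (le_max_left _ _) Du
      have X := Iconj (a+1) (max (a+1) v) a v _ _ (le_max_left _ _) ha DuI uf
      refine FF_congr (fun i => ?_) X
      show u i * (Dseq u i)⁻¹ * (u i)⁻¹ = Dseq (fun i => (u i)⁻¹) i
      simp only [Dseq, mul_inv_rev, inv_inv]
      group
    exact ⟨inv, mul, conj, comm⟩

end Core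

section Core2

variable {Q : Type*} [Group Q] {C : ℕ → Subgroup Q} {n p : ℕ}

/-- `Poly a v u`: `u` is a graded polynomial sequence for every fuel. -/
def PolyS (C : ℕ → Subgroup Q) (n : ℕ) (a v : ℕ) (u : ℕ → Q) : Prop :=
  ∀ f, FF C n f a v u

theorem PolyS_values {a v : ℕ} {u : ℕ → Q} (h : PolyS C n a v u) (i : ℕ) : u i ∈ C v :=
  FF_values (h 0) i

theorem PolyS_congr {a v : ℕ} {u w : ℕ → Q} (h : ∀ i, u i = w i) (hu : PolyS C n a v u) :
    PolyS C n a v w := fun f => FF_congr h (hu f)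

theorem PolyS_one (a v : ℕ) : PolyS C n a v (fun _ => (1 : Q)) := fun f => FF_one f a v

theorem PolyS_mono (hC : ChainHyp C n p) {a v a' v' : ℕ} {u : ℕ → Q} (ha : a' ≤ a)
    (hv : v' ≤ v) (hu : PolyS C n a v u) : PolyS C n a' v' u :=
  fun f => FF_mono hC f a v a' v' u ha hv (hu f)

theorem PolyS_inv (hC : ChainHyp C n p) {a v : ℕ} {u : ℕ → Q} (ha : a ≤ v)
    (hu : PolyS C n a v u) : PolyS C n a v (fun i => (u i)⁻¹) :=
  fun f => (FF_closure hC f).1 a v u ha (hu f)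

theorem PolyS_mul (hC : ChainHyp C n p) {a v b z : ℕ} {u w : ℕ → Q} (ha : a ≤ v) (hb : b ≤ z)
    (hu : PolyS C n a v u) (hw : PolyS C n b z w) :
    PolyS C n (min a b) (min v z) (fun i => u i * w i) :=
  fun f => (FF_closure hC f).2.1 a v b z u w ha hb (hu f) (hw f)

theorem PolyS_conj (hC : ChainHyp C n p) {a v b z : ℕ} {u w : ℕ → Q} (ha : a ≤ v) (hb : b ≤ z)
    (hu : PolyS C n a v u) (hw : PolyS C n b z w) :
    PolyS C n a v (fun i => w i * u i * (w i)⁻¹) :=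
  fun f => (FF_closure hC f).2.2.1 a v b z u w ha hb (hu f) (hw f)

theorem PolyS_D (hC : ChainHyp C n p) {a v : ℕ} {u : ℕ → Q} (hu : PolyS C n a v u) :
    PolyS C n (a + 1) (max (a + 1) v) (Dseq u) := by
  intro f
  rcases lt_or_ge v n with hv | hv
  · exact (hu (f + 1)).2 hv
  · have h1 : ∀ i, (1 : Q) = Dseq u i := by
      intro i; simp [Dseq, FF_eq_one hC hv (hu 0)]
    exact FF_congr h1 (FF_one _ _ _)

theorem FF_pow (hC : ChainHyp C n p) :
    ∀ f b t (β : Q), β ∈ C (b + t) → FF C n f b (b + t) (fun i => β ^ (i.choose t)) := by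
  intro f
  induction f with
  | zero => intro b t β hβ i; exact (C (b + t)).pow_mem hβ _
  | succ f ih =>
    intro b t β hβ
    refine ⟨fun i => (C (b + t)).pow_mem hβ _, fun _ => ?_⟩
    cases t with
    | zero =>
      have h1 : ∀ i, (1 : Q) = Dseq (fun i => β ^ (i.choose 0)) i := by
        intro i; simp [Dseq]
      exact FF_congr h1 (FF_one _ _ _)
    | succ s =>
      have key : FF C n f (b + 1) (b + 1 + s) (fun i => β ^ (i.choose s)) :=
        ih (b + 1) s β (by rw [show b + 1 + s = b + (s + 1) by omega]; exact hβ)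
      have h2 : max (b + 1) (b + (s + 1)) = b + 1 + s := by omega
      rw [h2]
      refine FF_congr (fun i => ?_) key
      show β ^ (i.choose s) = Dseq (fun i => β ^ (i.choose (s + 1))) i
      simp only [Dseq]
      rw [Nat.choose_succ_succ' i s, add_comm (i.choose s) (i.choose (s + 1)), pow_add]
      group

theorem PolyS_pow (hC : ChainHyp C n p) {b t : ℕ} {β : Q} (hβ : β ∈ C (b + t)) :
    PolyS C n b (b + t) (fun i => β ^ (i.choose t)) := fun f => FF_pow hC f b t β hβ

theorem FF_shift : ∀ f a v (u : ℕ → Q), FF C n f a v u → FF C n f a v (fun i => u (i + 1)) := by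
  intro f
  induction f with
  | zero => intro a v u h i; exact h (i + 1)
  | succ f ih =>
    intro a v u h
    refine ⟨fun i => h.1 (i + 1), fun hv => ?_⟩
    have := ih _ _ _ (h.2 hv)
    refine FF_congr (fun i => ?_) this
    rfl

theorem PolyS_shift {a v : ℕ} {u : ℕ → Q} (hu : PolyS C n a v u) :
    PolyS C n a v (fun i => u (i + 1)) := fun f => FF_shift f a v u (hu f)

/-- The leading coefficient of a polynomial sequence vanishing below `t` lies deep. -/
theorem lead_mem (hC : ChainHyp C n p) :
    ∀ t a v (u : ℕ → Q), a ≤ v → PolyS C n a v u → (∀ i, i < t → u i = 1) →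
      u t ∈ C (max (a + t) v) := by
  intro t
  induction t with
  | zero =>
    intro a v u ha hu _
    have : max (a + 0) v = v := by omega
    rw [this]
    exact PolyS_values hu 0
  | succ t ih =>
    intro a v u ha hu hpre
    have hDu := PolyS_D hC hu
    have hDpre : ∀ i, i < t → Dseq u i = 1 := by
      intro i hi
      simp [Dseq, hpre i (by omega), hpre (i + 1) (by omega)]
    have := ih (a + 1) (max (a + 1) v) (Dseq u) (le_max_left _ _) hDu hDpre
    have heq : u (t + 1) = Dseq u t := by
      rw [Dseq_succ u t, hpre t (by omega), one_mul]
    rw [heq]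
    have hidx : max (a + 1 + t) (max (a + 1) v) = max (a + (t + 1)) v := by omega
    rw [hidx] at this
    exact this

/-- Ordered product `u 0 * u 1 * ⋯ * u (m-1)`. -/
def prodN (u : ℕ → Q) : ℕ → Q
  | 0 => 1
  | m + 1 => prodN u m * u m

theorem prodN_congr {u w : ℕ → Q} : ∀ m, (∀ i, i < m → u i = w i) → prodN u m = prodN w m := by
  intro m
  induction m with
  | zero => intro _; rfl
  | succ m ih =>
    intro h
    show prodN u m * u m = prodN w m * w m
    rw [ih (fun i hi => h i (by omega)), h m (by omega)]

theorem prodN_one_seq : ∀ m, prodN (fun _ => (1 : Q)) m = 1 := by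
  intro m
  induction m with
  | zero => rfl
  | succ m ih => show prodN _ m * 1 = 1; rw [mul_one, ih]

theorem prodN_eq_one {u : ℕ → Q} (m : ℕ) (h : ∀ i, i < m → u i = 1) : prodN u m = 1 := by
  rw [prodN_congr m h, prodN_one_seq]

theorem prodN_pow_choose (β : Q) (t : ℕ) :
    ∀ m, prodN (fun i => β ^ (i.choose t)) m = β ^ (m.choose (t + 1)) := by
  intro m
  induction m with
  | zero => simp [prodN]
  | succ m ih =>
    show prodN _ m * β ^ (m.choose t) = _
    rw [ih, ← pow_add, Nat.choose_succ_succ' m t, add_comm (m.choose t) (m.choose (t+1))]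

/-- Collection identity: pull the `x`-parts of a product out to the right. -/
theorem prodN_collect (x r : ℕ → Q) :
    ∀ m, prodN (fun i => x i * r i) m =
      prodN (fun i => prodN x (i + 1) * r i * (prodN x (i + 1))⁻¹) m * prodN x m := by
  intro m
  induction m with
  | zero => simp [prodN]
  | succ m ih =>
    show prodN (fun i => x i * r i) m * (x m * r m) = _
    rw [ih]
    show _ = prodN (fun i => prodN x (i + 1) * r i * (prodN x (i + 1))⁻¹) m *
      (prodN x (m + 1) * r m * (prodN x (m + 1))⁻¹) * prodN x (m + 1)
    have : prodN x (m + 1) = prodN x m * x m := rfl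
    rw [this]
    group

end Core2

section Core3

variable {Q : Type*} [Group Q] {C : ℕ → Subgroup Q} {n p : ℕ}

/-- The main collection theorem: products over `range n` of graded polynomial
sequences are trivial. -/
theorem Bstrip (hC : ChainHyp C n p) :
    ∀ d t a v (u : ℕ → Q), n ≤ t + d → 1 ≤ a → a ≤ v → PolyS C n a v u →
      (∀ i, i < t → u i = 1) → prodN u n = 1 := by
  intro d
  induction d with
  | zero =>
    intro t a v u hnt _ _ _ hpre
    exact prodN_eq_one n (fun i hi => hpre i (by omega))
  | succ d ih =>
    intro t a v u hnt h1a hav hu hpre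
    rcases le_or_gt n t with ht | ht
    · exact prodN_eq_one n (fun i hi => hpre i (by omega))
    · -- strip the leading coefficient
      set β := u t with hβdef
      have hβ : β ∈ C (max (a + t) v) := lead_mem hC t a v u hav hu hpre
      set b := max a (v - t) with hbdef
      have hab : a ≤ b := le_max_left _ _
      have hbt : b + t = max (a + t) v := by omega
      have hβ' : β ∈ C (b + t) := by rw [hbt]; exact hβ
      have hx : PolyS C n b (b + t) (fun i => β ^ (i.choose t)) := PolyS_pow hC hβ'
      -- u₂ = x⁻¹ * u
      have hxinv : PolyS C n b (b + t) (fun i => (β ^ (i.choose t))⁻¹) :=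
        PolyS_inv hC (by omega) hx
      have hu₂' := PolyS_mul hC (by omega : b ≤ b + t) hav hxinv hu
      have hu₂ : PolyS C n a v (fun i => (β ^ (i.choose t))⁻¹ * u i) := by
        have e1 : min b a = a := by omega
        have e2 : min (b + t) v = v := by omega
        rwa [e1, e2] at hu₂'
      have hpre₂ : ∀ i, i < t + 1 → (β ^ (i.choose t))⁻¹ * u i = 1 := by
        intro i hi
        rcases lt_or_ge i t with hit | hit
        · rw [Nat.choose_eq_zero_of_lt hit, pow_zero, hpre i hit, inv_one, one_mul]
        · have : i = t := by omega
          rw [this, Nat.choose_self, pow_one, ← hβdef, inv_mul_cancel]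
      -- Y sequence
      have hb1 : 1 ≤ b := le_trans h1a hab
      have hYpow : PolyS C n (b - 1) ((b - 1) + (t + 1)) (fun i => β ^ (i.choose (t + 1))) :=
        PolyS_pow hC (by rw [show b - 1 + (t + 1) = b + t by omega]; exact hβ')
      have hY : PolyS C n (b - 1) (b + t) (fun i => β ^ ((i + 1).choose (t + 1))) := by
        have := PolyS_shift hYpow
        rwa [show b - 1 + (t + 1) = b + t by omega] at this
      -- conjugated stripped sequence
      have hucj : PolyS C n a v (fun i => β ^ ((i + 1).choose (t + 1)) *
          ((β ^ (i.choose t))⁻¹ * u i) * (β ^ ((i + 1).choose (t + 1)))⁻¹) :=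
        PolyS_conj hC hav (by omega : b - 1 ≤ b + t) hu₂ hY
      have hpreucj : ∀ i, i < t + 1 → β ^ ((i + 1).choose (t + 1)) *
          ((β ^ (i.choose t))⁻¹ * u i) * (β ^ ((i + 1).choose (t + 1)))⁻¹ = 1 := by
        intro i hi
        rw [hpre₂ i hi, mul_one, mul_inv_cancel]
      have hprod : prodN (fun i => β ^ ((i + 1).choose (t + 1)) *
          ((β ^ (i.choose t))⁻¹ * u i) * (β ^ ((i + 1).choose (t + 1)))⁻¹) n = 1 :=
        ih (t + 1) a v _ (by omega) h1a hav hucj hpreucj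
      -- assemble
      have hsplit : prodN u n = prodN (fun i => β ^ (i.choose t) *
          ((β ^ (i.choose t))⁻¹ * u i)) n := by
        refine prodN_congr n (fun i _ => ?_)
        rw [mul_inv_cancel_left]
      rw [hsplit, prodN_collect]
      have hYeq : ∀ i, prodN (fun j => β ^ (j.choose t)) (i + 1) =
          β ^ ((i + 1).choose (t + 1)) := fun i => prodN_pow_choose β t (i + 1)
      have hconj : prodN (fun i => prodN (fun j => β ^ (j.choose t)) (i + 1) *
          ((β ^ (i.choose t))⁻¹ * u i) * (prodN (fun j => β ^ (j.choose t)) (i + 1))⁻¹) n = 1 := by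
        rw [prodN_congr n (fun i _ => by rw [hYeq i])]
        exact hprod
      rw [hconj, one_mul, prodN_pow_choose]
      -- kill β ^ (n.choose (t+1))
      rcases lt_or_ge (t + 1) n with hlt | hge
      · obtain ⟨c, hc⟩ := hC.dvd (t + 1) (by omega) hlt
        rw [hc, pow_mul]
        have hβ1 : β ∈ C 1 := hC.anti (by omega) hβ'
        rw [hC.expp β hβ1, one_pow]
      · have : t + 1 = n := by omega
        have hβn : β ∈ C n := hC.anti (by omega : n ≤ b + t) hβ'
        rw [hC.bot] at hβn
        rw [Subgroup.mem_bot.mp hβn, one_pow]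

theorem FF_orbit (hC : ChainHyp C n p) (g : Q)
    (hgain : ∀ a, 1 ≤ a → ⁅C a, (⊤ : Subgroup Q)⁆ ≤ C (a + 1)) :
    ∀ f a (x : Q), 1 ≤ a → x ∈ C a → FF C n f a a (fun i => g ^ i * x * (g ^ i)⁻¹) := by
  intro f
  induction f with
  | zero => intro a x _ hx i; exact (hC.norm a).conj_mem _ hx _
  | succ f ih =>
    intro a x h1a hx
    refine ⟨fun i => (hC.norm a).conj_mem _ hx _, fun _ => ?_⟩
    have hδ : ⁅x⁻¹, g⁆ ∈ C (a + 1) :=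
      hgain a h1a (Subgroup.commutator_mem_commutator ((C a).inv_mem hx) (Subgroup.mem_top g))
    have key := ih (a + 1) ⁅x⁻¹, g⁆ (by omega) hδ
    have hidx : max (a + 1) a = a + 1 := by omega
    rw [hidx]
    refine FF_congr (fun i => ?_) key
    show g ^ i * ⁅x⁻¹, g⁆ * (g ^ i)⁻¹ = Dseq (fun i => g ^ i * x * (g ^ i)⁻¹) i
    simp only [Dseq, commutatorElement_def, inv_inv, mul_inv_rev, pow_succ]
    group

theorem prodN_orbit (c g : Q) : ∀ m, (c * g) ^ m = prodN (fun i => g ^ i * c * (g ^ i)⁻¹) m * g ^ m := by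
  intro m
  induction m with
  | zero => simp [prodN]
  | succ m ih =>
    rw [pow_succ, ih]
    show _ = prodN _ m * (g ^ m * c * (g ^ m)⁻¹) * g ^ (m + 1)
    rw [pow_succ]
    simp [mul_assoc]

/-- The core theorem: `(c*g)^n = g^n` for `c` in the first term of the chain. -/
theorem core_pow (hC : ChainHyp C n p)
    (hgain : ∀ a, 1 ≤ a → ⁅C a, (⊤ : Subgroup Q)⁆ ≤ C (a + 1))
    (g c : Q) (hc : c ∈ C 1) : (c * g) ^ n = g ^ n := by
  have horb : PolyS C n 1 1 (fun i => g ^ i * c * (g ^ i)⁻¹) :=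
    fun f => FF_orbit hC g hgain f 1 c le_rfl hc
  have h1 : prodN (fun i => g ^ i * c * (g ^ i)⁻¹) n = 1 :=
    Bstrip hC n 0 1 1 _ (by omega) le_rfl le_rfl horb (fun i hi => by omega)
  rw [prodN_orbit c g n, h1, one_mul]

end Core3

private theorem comm_pow_eq {Q : Type*} [Group Q] (x y : Q) (m : ℕ) :
    ⁅x, y ^ m⁆ = (⁅x, y⁆ * y) ^ m * (y ^ m)⁻¹ := by
  have h : ⁅x, y⁆ * y = x * y * x⁻¹ := by group
  rw [h, conj_pow]
  group

private theorem comm_mul_right {G : Type*} [Group G] (h a b : G) :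
    ⁅h, a * b⁆ = ⁅h, a⁆ * (a * ⁅h, b⁆ * a⁻¹) := by
  simp only [commutatorElement_def]
  group

private theorem comm_inv_right {G : Type*} [Group G] (h a : G) :
    ⁅h, a⁻¹⁆ = a⁻¹ * ⁅h, a⁆⁻¹ * (a⁻¹)⁻¹ := by
  simp only [commutatorElement_def]
  group

theorem commutator_with_powers_le
    {p : ℕ} (hp : p.Prime)
    {G : Type*} [Group G] [Finite G] (hG : IsPGroup p G)
    (H : Subgroup G) (hH : H.Normal) (k : ℕ) (hk : 1 ≤ k) :
    ⁅H, sgPow (⊤ : Subgroup G) (p ^ k)⁆ ≤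
      sgPow ⁅H, (⊤ : Subgroup G)⁆ p ⊔ iterComm H (p ^ k) := by
  classical
  set n := p ^ k with hn
  have hn1 : 1 ≤ n := Nat.one_le_pow _ _ hp.pos
  set N : Subgroup G := sgPow ⁅H, (⊤ : Subgroup G)⁆ p ⊔ iterComm H n with hN
  haveI : H.Normal := hH
  haveI hcommN : (⁅H, (⊤ : Subgroup G)⁆).Normal := Subgroup.commutator_normal _ _
  haveI hsgN : (sgPow ⁅H, (⊤ : Subgroup G)⁆ p).Normal := sgPow_normal hcommN p
  haveI hitN : (iterComm H n).Normal := iterComm_normal hH n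
  haveI hNnormal : N.Normal := Subgroup.sup_normal _ _
  -- the key fact: for all h ∈ H and g ∈ G, ⁅h, g ^ n⁆ ∈ N
  have key : ∀ h ∈ H, ∀ g : G, ⁅h, g ^ n⁆ ∈ N := by
    intro h hh g
    set π := QuotientGroup.mk' N with hπ
    have hπsurj : Function.Surjective π := QuotientGroup.mk'_surjective N
    -- the chain in the quotient
    set C : ℕ → Subgroup (G ⧸ N) :=
      fun j => if j = 0 then ⊤ else (iterComm H j).map π with hC
    have hCpos : ∀ j, j ≠ 0 → C j = (iterComm H j).map π := by
      intro j hj; simp [hC, hj]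
    have hC0 : C 0 = ⊤ := by simp [hC]
    have hCnorm : ∀ j, (C j).Normal := by
      intro j
      rcases Nat.eq_zero_or_pos j with rfl | hj
      · rw [hC0]; infer_instance
      · rw [hCpos j (by omega)]
        exact (iterComm_normal hH j).map π hπsurj
    have hCanti : ∀ {a b : ℕ}, a ≤ b → C b ≤ C a := by
      intro a b hab
      rcases Nat.eq_zero_or_pos a with rfl | ha
      · rw [hC0]; exact le_top
      · rw [hCpos a (by omega), hCpos b (by omega)]
        exact Subgroup.map_mono (iterComm_antitone hH hab)
    have hCgrade : ∀ a b : ℕ, ⁅C a, C b⁆ ≤ C (a + b) := by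
      intro a b
      rcases Nat.eq_zero_or_pos a with rfl | ha
      · rcases Nat.eq_zero_or_pos b with rfl | hb
        · rw [hC0]; exact le_top
        · haveI := hCnorm b
          have := Subgroup.commutator_le_right (C 0) (C b)
          simpa using this
      · rcases Nat.eq_zero_or_pos b with rfl | hb
        · haveI := hCnorm a
          have := Subgroup.commutator_le_left (C a) (C 0)
          simpa using this
        · rw [hCpos a (by omega), hCpos b (by omega), hCpos (a+b) (by omega),
            ← Subgroup.map_commutator]
          exact Subgroup.map_mono (iterComm_grading hH b a)
    have hCbot : C n = ⊥ := by
      rw [hCpos n (by omega)]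
      rw [Subgroup.map_eq_bot_iff]
      rw [hπ, QuotientGroup.ker_mk']
      exact le_sup_right
    have hCexp : ∀ x ∈ C 1, x ^ p = 1 := by
      intro x hx
      rw [hCpos 1 one_ne_zero] at hx
      obtain ⟨a, ha, rfl⟩ := hx
      have : (π a) ^ p = π (a ^ p) := (map_pow π a p).symm
      rw [this, hπ]
      rw [QuotientGroup.mk'_apply, QuotientGroup.eq_one_iff]
      exact Subgroup.mem_sup_left (mem_sgPow ha p)
    have hCdvd : ∀ t, 0 < t → t < n → p ∣ n.choose t := by
      intro t h0 h1
      exact hp.dvd_choose_pow (by omega) (by omega)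
    have hch : ChainHyp C n p := ⟨hCanti, hCnorm, hCgrade, hCbot, hCexp, hCdvd⟩
    have hCgain : ∀ a, 1 ≤ a → ⁅C a, (⊤ : Subgroup (G ⧸ N))⁆ ≤ C (a + 1) := by
      intro a ha
      rw [hCpos a (by omega), hCpos (a+1) (by omega),
        ← Subgroup.map_top_of_surjective π hπsurj, ← Subgroup.map_commutator]
      exact le_of_eq rfl
    -- the commutator element in the quotient
    have hc : ⁅π h, π g⁆ ∈ C 1 := by
      rw [hCpos 1 one_ne_zero]
      have : ⁅π h, π g⁆ = π ⁅h, g⁆ := (map_commutatorElement π h g).symm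
      rw [this]
      exact Subgroup.mem_map_of_mem π
        (Subgroup.commutator_mem_commutator hh (Subgroup.mem_top g))
    have hcore := core_pow hch hCgain (π g) ⁅π h, π g⁆ hc
    have hfin : π ⁅h, g ^ n⁆ = 1 := by
      rw [map_commutatorElement, map_pow, comm_pow_eq, hcore, mul_inv_cancel]
    rw [hπ, QuotientGroup.mk'_apply, QuotientGroup.eq_one_iff] at hfin
    exact hfin
  -- assemble via the subgroup T
  set T : Subgroup G :=
    { carrier := { x : G | ∀ h ∈ H, ⁅h, x⁆ ∈ N }
      one_mem' := by
        intro h _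
        simpa using N.one_mem
      mul_mem' := by
        intro a b ha hb h hh
        rw [comm_mul_right]
        exact N.mul_mem (ha h hh) (hNnormal.conj_mem _ (hb h hh) a)
      inv_mem' := by
        intro a ha h hh
        rw [comm_inv_right]
        exact hNnormal.conj_mem _ (N.inv_mem (ha h hh)) a⁻¹ } with hT
  have hTle : sgPow (⊤ : Subgroup G) n ≤ T := by
    apply sgPow_le
    intro g _
    intro h hh
    exact key h hh g
  rw [Subgroup.commutator_le]
  intro h hh x hx
  exact hTle hx h hh
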